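/- For x > 0 and p a positive integer, x [ln(px/(x+p+1)) − ψ_p(x)] = x ∫_0^∞ (1 − e^{−(p+1)t}) φ(t) e^{−xt} dt, where φ(t) = 1/(1 − e^{−t}) − 1/t. -/

import Mathlib

open Real Finset MeasureTheory

noncomputable def pPsi (p : ℕ) (x : ℝ) : ℝ :=
  Real.log p - ∑ k ∈ Finset.range (p + 1), 1 / (x + k)


lemma integral_exp_neg_mul_Ioi0 {c : ℝ} (hc : 0 < c) :
    ∫ t in Set.Ioi (0:ℝ), Real.exp (-c * t) = 1 / c := by
  have h := integral_Ioi_of_hasDerivAt_of_tendsto (f := fun t => -Real.exp (-c * t) / c)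
    (f' := fun t => Real.exp (-c * t)) (a := (0:ℝ)) (m := 0)
    ?_ ?_ (exp_neg_integrableOn_Ioi 0 hc) ?_
  · rw [h]; field_simp; simp
  · exact (((Real.continuous_exp.comp (continuous_const.mul continuous_id)).neg.div_const c).continuousWithinAt)
  · intro t _
    simpa [hc.ne', neg_div, neg_mul, mul_comm, mul_div_assoc, mul_div_cancel_left₀] using
      (((hasDerivAt_id t).const_mul (-c)).exp.neg.div_const c)
  · have : Filter.Tendsto (fun t : ℝ => Real.exp (-c * t)) Filter.atTop (nhds 0) :=
      Real.tendsto_exp_atBot.comp (Filter.tendsto_id.const_mul_atTop_of_neg (by linarith))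
    simpa [neg_div] using (this.neg.div_const c)

lemma inner_slice {a b t : ℝ} (hab : a ≤ b) (ht : 0 < t) :
    ∫ y in Set.Ioc a b, Real.exp (-t * y)
      = (Real.exp (-t * a) - Real.exp (-t * b)) / t := by
  rw [← intervalIntegral.integral_of_le hab]
  have : ∀ y : ℝ, Real.exp (-t * y) = Real.exp (-(t * y)) := by intro y; ring_nf
  simp_rw [this]
  rw [show (fun y : ℝ => Real.exp (-(t*y))) = fun y => Real.exp (-(t*y)) from rfl]
  have := intervalIntegral.integral_comp_mul_left (a := a) (b := b)
    (fun y : ℝ => Real.exp (-y)) (c := t)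
  rw [this ht.ne']
  have hsub : ∫ x in t*a..t*b, Real.exp (-x) = Real.exp (-(t*a)) - Real.exp (-(t*b)) := by
    rw [intervalIntegral.integral_comp_neg (fun x => Real.exp x), integral_exp]
  rw [hsub, smul_eq_mul]
  field_simp

lemma frullani_exp {a b : ℝ} (ha : 0 < a) (hab : a ≤ b) :
    IntegrableOn (fun t => (Real.exp (-a * t) - Real.exp (-b * t)) / t) (Set.Ioi 0)
    ∧ ∫ t in Set.Ioi (0:ℝ), (Real.exp (-a * t) - Real.exp (-b * t)) / t
        = Real.log b - Real.log a := by
  set μ := volume.restrict (Set.Ioi (0:ℝ))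
  set ν := volume.restrict (Set.Ioc a b)
  have hb : 0 < b := lt_of_lt_of_le ha hab
  -- integrability of (t,y) ↦ exp (-t*y) on product
  have hmeas : AEStronglyMeasurable (fun z : ℝ × ℝ => Real.exp (-z.1 * z.2)) (μ.prod ν) := by
    apply Continuous.aestronglyMeasurable
    continuity
  have hprod : Integrable (fun z : ℝ × ℝ => Real.exp (-z.1 * z.2)) (μ.prod ν) := by
    have hdom : Integrable (fun z : ℝ × ℝ => Real.exp (-a * z.1)) (μ.prod ν) := by
      have h1 : Integrable (fun t : ℝ => Real.exp (-a * t)) μ := exp_neg_integrableOn_Ioi 0 ha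
      have h2 : Integrable (fun _ : ℝ => (1:ℝ)) ν := by
        refine integrable_const_iff.2 (Or.inr ?_)
        exact ⟨by simp [ν, Real.volume_Ioc, lt_top_iff_ne_top]⟩
      exact (Integrable.mul_prod h1 h2).congr (by filter_upwards with z; simp)
    refine hdom.mono' hmeas ?_
    have hmem : ∀ᵐ z : ℝ × ℝ ∂(μ.prod ν), z ∈ (Set.Ioi (0:ℝ)) ×ˢ (Set.Ioc a b) := by
      rw [Measure.prod_restrict]
      exact ae_restrict_mem (measurableSet_Ioi.prod measurableSet_Ioc)
    filter_upwards [hmem] with z hz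
    rcases hz with ⟨h1, h2⟩
    rw [Real.norm_eq_abs, abs_of_pos (Real.exp_pos _)]
    apply Real.exp_le_exp.2
    have : a * z.1 ≤ z.2 * z.1 := mul_le_mul_of_nonneg_right h2.1.le (le_of_lt h1)
    nlinarith [h1, h2.1]
  have hEq : ∀ᵐ t ∂μ, (∫ y, Real.exp (-t * y) ∂ν)
      = (Real.exp (-a * t) - Real.exp (-b * t)) / t := by
    filter_upwards [ae_restrict_mem measurableSet_Ioi] with t ht
    have h := inner_slice hab ht
    simpa [ν, mul_comm] using h
  have hint : IntegrableOn (fun t => (Real.exp (-a*t) - Real.exp (-b*t))/t) (Set.Ioi 0) :=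
    (hprod.integral_prod_left).congr hEq
  have hswap := MeasureTheory.integral_integral_swap
    (f := fun t y => Real.exp (-t*y)) (μ := μ) (ν := ν) hprod
  have hL : ∫ t, (∫ y, Real.exp (-t*y) ∂ν) ∂μ
      = ∫ t in Set.Ioi (0:ℝ), (Real.exp (-a*t)-Real.exp (-b*t))/t :=
    integral_congr_ae hEq
  have hR : ∫ y, (∫ t, Real.exp (-t*y) ∂μ) ∂ν = Real.log b - Real.log a := by
    have h1 : ∀ᵐ y ∂ν, (∫ t, Real.exp (-t*y) ∂μ) = 1/y := by
      filter_upwards [ae_restrict_mem measurableSet_Ioc] with y hy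
      have hy0 : 0 < y := ha.trans hy.1
      simpa [mul_comm] using integral_exp_neg_mul_Ioi0 hy0
    rw [integral_congr_ae h1]
    have h2 : ∫ y in Set.Ioc a b, 1/y = Real.log (b/a) := by
      rw [← intervalIntegral.integral_of_le hab, integral_one_div]
      rw [Set.uIcc_of_le hab]
      rintro ⟨h0, _⟩; linarith
    rw [show (∫ y, 1/y ∂ν) = ∫ y in Set.Ioc a b, 1/y from rfl, h2,
      Real.log_div hb.ne' ha.ne']
  exact ⟨hint, by rw [← hL, hswap, hR]⟩

theorem theta_integral_rep (p : ℕ) (hp : 1 ≤ p) (x : ℝ) (hx : 0 < x) :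
    x * (Real.log ((p : ℝ) * x / (x + p + 1)) - pPsi p x)
      = x * ∫ t in Set.Ioi (0 : ℝ),
          (1 - Real.exp (-((p : ℝ) + 1) * t)) *
            (1 / (1 - Real.exp (-t)) - 1 / t) * Real.exp (-x * t) := by
  have hb : (0:ℝ) < x + p + 1 := by positivity
  have hxk : ∀ k : ℕ, (0:ℝ) < x + k := fun k => by positivity
  have hxb : x ≤ x + (p:ℝ) + 1 := by have : (0:ℝ) ≤ p := Nat.cast_nonneg p; linarith
  have hcongr : Set.EqOn
      (fun t => (1 - Real.exp (-((p : ℝ) + 1) * t)) *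
            (1 / (1 - Real.exp (-t)) - 1 / t) * Real.exp (-x * t))
      (fun t => (∑ k ∈ Finset.range (p+1), Real.exp (-(x+(k:ℝ)) * t))
        - (Real.exp (-x*t) - Real.exp (-(x+(p:ℝ)+1)*t)) / t) (Set.Ioi 0) := by
    intro t ht
    have ht0 : (0:ℝ) < t := ht
    set u := Real.exp (-t) with hu
    have hu1 : u < 1 := by rw [hu, Real.exp_lt_one_iff]; linarith
    have hune : u ≠ 1 := ne_of_lt hu1
    have h1u : (1:ℝ) - u ≠ 0 := sub_ne_zero.2 (Ne.symm hune)
    have hpow : Real.exp (-((p:ℝ)+1) * t) = u ^ (p+1) := by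
      rw [hu, ← Real.exp_nat_mul]; push_cast; ring_nf
    have hgeom : (∑ k ∈ Finset.range (p+1), u ^ k) = (1 - u^(p+1)) / (1 - u) := by
      rw [geom_sum_eq hune,
        show (1 - u^(p+1)) = -(u^(p+1) - 1) by ring,
        show (1 - u) = -(u - 1) by ring, neg_div_neg_eq]
    have hsum : ∑ k ∈ Finset.range (p+1), Real.exp (-(x+(k:ℝ))*t)
        = (∑ k ∈ Finset.range (p+1), u^k) * Real.exp (-x*t) := by
      rw [Finset.sum_mul]
      refine Finset.sum_congr rfl fun k _ => ?_
      rw [hu, ← Real.exp_nat_mul, ← Real.exp_add]; ring_nf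
    have hbexp : Real.exp (-(x+(p:ℝ)+1)*t) = u^(p+1) * Real.exp (-x*t) := by
      rw [hu, ← Real.exp_nat_mul, ← Real.exp_add]; push_cast; ring_nf
    simp only
    rw [hpow, hsum, hgeom, hbexp, ← hu]
    field_simp
  rw [setIntegral_congr_fun measurableSet_Ioi hcongr]
  have hsumInt : IntegrableOn
      (fun t => ∑ k ∈ Finset.range (p+1), Real.exp (-(x+(k:ℝ)) * t)) (Set.Ioi 0) :=
    integrable_finset_sum _ (fun k _ => exp_neg_integrableOn_Ioi 0 (hxk k))
  have hF := frullani_exp hx hxb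
  rw [MeasureTheory.integral_sub hsumInt hF.1,
    MeasureTheory.integral_finset_sum _ (fun k _ => exp_neg_integrableOn_Ioi 0 (hxk k))]
  have hvals : ∀ k ∈ Finset.range (p+1),
      (∫ t in Set.Ioi (0:ℝ), Real.exp (-(x+(k:ℝ)) * t)) = 1/(x+(k:ℝ)) :=
    fun k _ => integral_exp_neg_mul_Ioi0 (hxk k)
  rw [Finset.sum_congr rfl hvals, hF.2]
  have hp0 : (p:ℝ) ≠ 0 := Nat.cast_ne_zero.2 (by omega)
  rw [pPsi, Real.log_div (by positivity) hb.ne', Real.log_mul hp0 hx.ne']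
  ring
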